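/- For every N ∈ ℕ and all real coefficients a₀, a₁, …, a_N: ∫₀^π ( Σ_{n=1}^N n²·a_n·cos(n·x) + 2 )² dx ≥ 4π. Consequently there is no sequence of finite cosine combinations u_k(x) = Σ_{n=0}^{N_k} a_{k,n}·cos(n·x) such that simultaneously ∫₀^π (u_k(x) − x²)² dx → 0 and ∫₀^π (u_k''(x) − 2)² dx → 0; in particular the system cos(nx), n ≥ 0, is not complete in W₂²([0,π]). -/

import Mathlib

open Finset Real Filter Topology

lemma cos_int_zero {n : ℕ} (hn : 1 ≤ n) : ∫ x in (0:ℝ)..π, Real.cos (n * x) = 0 := by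
  have hn' : (n : ℝ) ≠ 0 := by positivity
  have := intervalIntegral.integral_comp_mul_left (a := (0:ℝ)) (b := π)
    (fun x => Real.cos x) hn'
  simp only [mul_zero] at this
  rw [this, integral_cos]
  simp [Real.sin_nat_mul_pi]

lemma key (N : ℕ) (a : ℕ → ℝ) :
    4 * π ≤ ∫ x in (0:ℝ)..π, (∑ n ∈ Icc 1 N, (n : ℝ) ^ 2 * a n * cos (n * x) + 2) ^ 2 := by
  set g : ℝ → ℝ := fun x => ∑ n ∈ Icc 1 N, (n : ℝ) ^ 2 * a n * cos (n * x) with hg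
  have hgc : Continuous g := by
    apply continuous_finset_sum
    intro n _
    exact (continuous_const.mul (Real.continuous_cos.comp (continuous_const.mul continuous_id)))
  have hI1 : IntervalIntegrable (fun x => g x ^ 2) MeasureTheory.volume 0 π :=
    (hgc.pow 2).intervalIntegrable _ _
  have hI2 : IntervalIntegrable (fun x => 4 * g x + 4) MeasureTheory.volume 0 π :=
    ((continuous_const.mul hgc).add continuous_const).intervalIntegrable _ _
  have hsplit : (∫ x in (0:ℝ)..π, (g x + 2) ^ 2)
      = (∫ x in (0:ℝ)..π, g x ^ 2) + ∫ x in (0:ℝ)..π, (4 * g x + 4) := by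
    rw [← intervalIntegral.integral_add hI1 hI2]
    congr 1
    funext x
    ring
  have hIg : IntervalIntegrable g MeasureTheory.volume 0 π :=
    hgc.intervalIntegrable _ _
  have hg0 : (∫ x in (0:ℝ)..π, g x) = 0 := by
    rw [hg]
    rw [intervalIntegral.integral_finset_sum]
    · apply Finset.sum_eq_zero
      intro n hn
      rw [intervalIntegral.integral_const_mul, cos_int_zero (mem_Icc.mp hn).1, mul_zero]
    · intro n _
      exact (continuous_const.mul (Real.continuous_cos.comp (continuous_const.mul continuous_id))).intervalIntegrable _ _
  have h2 : (∫ x in (0:ℝ)..π, (4 * g x + 4)) = 4 * π := by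
    rw [intervalIntegral.integral_add (f := fun x => 4 * g x) ((continuous_const.mul hgc).intervalIntegrable _ _)
      (intervalIntegrable_const), intervalIntegral.integral_const_mul, hg0,
      intervalIntegral.integral_const]
    simp [mul_comm]
  have h3 : 0 ≤ ∫ x in (0:ℝ)..π, g x ^ 2 :=
    intervalIntegral.integral_nonneg pi_pos.le (fun x _ => sq_nonneg _)
  calc 4 * π = 0 + 4 * π := by ring
    _ ≤ (∫ x in (0:ℝ)..π, g x ^ 2) + ∫ x in (0:ℝ)..π, (4 * g x + 4) := by
        rw [h2]; exact add_le_add_left h3 _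
    _ = _ := hsplit.symm

/-- Incompleteness of the cosines in `W₂²([0,π])` (Section 4 of the paper):
the second derivatives of cosine combinations stay at `L²`-distance at least
`√(4π)` from the constant `2 = (x²)''`; hence no sequence of cosine combinations
approximates `x²` together with its second derivative in `L²(0,π)`. -/
theorem stmt8 :
    (∀ (N : ℕ) (a : ℕ → ℝ),
      4 * π ≤ ∫ x in (0:ℝ)..π, (∑ n ∈ Icc 1 N, (n : ℝ) ^ 2 * a n * cos (n * x) + 2) ^ 2) ∧
    ¬ ∃ (Nk : ℕ → ℕ) (a : ℕ → ℕ → ℝ),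
      Tendsto (fun k => ∫ x in (0:ℝ)..π,
          ((∑ n ∈ range (Nk k + 1), a k n * cos (n * x)) - x ^ 2) ^ 2) atTop (𝓝 0) ∧
      Tendsto (fun k => ∫ x in (0:ℝ)..π,
          ((-∑ n ∈ Icc 1 (Nk k), (n : ℝ) ^ 2 * a k n * cos (n * x)) - 2) ^ 2) atTop (𝓝 0) := by
  constructor
  · exact key
  · rintro ⟨Nk, a, -, h2⟩
    have heq : ∀ k, (∫ x in (0:ℝ)..π,
        ((-∑ n ∈ Icc 1 (Nk k), (n : ℝ) ^ 2 * a k n * cos (n * x)) - 2) ^ 2)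
        = ∫ x in (0:ℝ)..π,
        (∑ n ∈ Icc 1 (Nk k), (n : ℝ) ^ 2 * a k n * cos (n * x) + 2) ^ 2 := by
      intro k
      congr 1
      funext x
      ring
    have hle : (4 : ℝ) * π ≤ 0 := by
      refine ge_of_tendsto' h2 ?_
      intro k
      rw [heq k]
      exact key (Nk k) (a k)
    linarith [pi_pos]
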